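/- Let (X,ρ) be a compact metric space, f : X → X continuous, x ∈ X, ε > 0, and m, n ∈ ℕ. Then C^f_m(x, n, ε) ≥ 1/r_m(ε/2, X), where r_m(ε/2, X) is the smallest cardinality of an (m, ε/2)-spanning subset of X. -/
import Mathlib


open Filter Topology Set MeasureTheory

section Defs

variable {X : Type*} [MetricSpace X]

/-- Bowen's metric `ρ^f_m(y,z) = max_{0 ≤ i < m} ρ(f^i y, f^i z)`. -/
noncomputable def bowenDist (f : X → X) (m : ℕ) (y z : X) : ℝ :=
  (((Finset.range m).sup fun i => nndist (f^[i] y) (f^[i] z)) : NNReal)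

open scoped Classical in
/-- The correlation sum `C^f_m(x,n,ε)`. -/
noncomputable def corrSum (f : X → X) (m : ℕ) (x : X) (n : ℕ) (ε : ℝ) : ℝ :=
  (((Finset.range n ×ˢ Finset.range n).filter fun q =>
      bowenDist f m (f^[q.1] x) (f^[q.2] x) ≤ ε).card : ℝ) / (n : ℝ) ^ 2

/-- `ĉ^f_m(x,ε) = limsup_{n→∞} C^f_m(x,n,ε)`. -/
noncomputable def corrUpper (f : X → X) (m : ℕ) (x : X) (ε : ℝ) : ℝ :=
  Filter.limsup (fun n : ℕ => corrSum f m x n ε) Filter.atTop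

/-- `č^f_m(x,ε) = liminf_{n→∞} C^f_m(x,n,ε)`. -/
noncomputable def corrLower (f : X → X) (m : ℕ) (x : X) (ε : ℝ) : ℝ :=
  Filter.liminf (fun n : ℕ => corrSum f m x n ε) Filter.atTop

/-- The upper local correlation entropy `entr⁺(f,x) = lim_{ε→0⁺} limsup_m (−1/m) log č^f_m(x,ε)`;
the limit as `ε → 0⁺` exists by monotonicity in `ε`, and is expressed here as a `limsup`
along `𝓝[>] 0` (with values in `EReal`). -/
noncomputable def entrUpper (f : X → X) (x : X) : EReal :=
  Filter.limsup (fun ε : ℝ =>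
      Filter.limsup (fun m : ℕ => ((-(1 / (m : ℝ)) * Real.log (corrLower f m x ε) : ℝ) : EReal))
        Filter.atTop)
    (𝓝[>] (0 : ℝ))

/-- The lower local correlation entropy `entr⁻(f,x) = lim_{ε→0⁺} liminf_m (−1/m) log ĉ^f_m(x,ε)`. -/
noncomputable def entrLower (f : X → X) (x : X) : EReal :=
  Filter.limsup (fun ε : ℝ =>
      Filter.liminf (fun m : ℕ => ((-(1 / (m : ℝ)) * Real.log (corrUpper f m x ε) : ℝ) : EReal))
        Filter.atTop)
    (𝓝[>] (0 : ℝ))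

/-- `r_m(ε,K)`: the smallest cardinality of a subset of `K` which `(m,ε)`-spans `K`. -/
noncomputable def spanNumOn (f : X → X) (K : Set X) (m : ℕ) (ε : ℝ) : ℕ :=
  sInf {k : ℕ | ∃ A : Finset X, ↑A ⊆ K ∧ A.card = k ∧ ∀ y ∈ K, ∃ a ∈ A, bowenDist f m y a ≤ ε}

/-- Bowen's topological entropy of `f` on `K` (for `K = univ`, of `f` itself;
for closed invariant `K`, of the restriction of `f` to `K`). -/
noncomputable def topEntropyOn (f : X → X) (K : Set X) : EReal :=
  Filter.limsup (fun ε : ℝ =>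
      Filter.limsup (fun n : ℕ => (((1 / (n : ℝ)) * Real.log (spanNumOn f K n ε) : ℝ) : EReal))
        Filter.atTop)
    (𝓝[>] (0 : ℝ))

end Defs

lemma bowenDist_triangle' {X : Type*} [MetricSpace X] (f : X → X) (m : ℕ) (y z a : X) :
    bowenDist f m y z ≤ bowenDist f m y a + bowenDist f m z a := by
  unfold bowenDist
  rw [← NNReal.coe_add]
  refine NNReal.coe_le_coe.2 (Finset.sup_le fun i hi => ?_)
  calc nndist (f^[i] y) (f^[i] z)
      ≤ nndist (f^[i] y) (f^[i] a) + nndist (f^[i] z) (f^[i] a) := by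
        rw [nndist_comm (f^[i] z)]; exact nndist_triangle _ _ _
    _ ≤ _ := add_le_add (Finset.le_sup (f := fun i => nndist (f^[i] y) (f^[i] a)) hi)
          (Finset.le_sup (f := fun i => nndist (f^[i] z) (f^[i] a)) hi)

/-- `C^f_m(x,n,ε) ≥ 1/r_m(ε/2,X)`. -/
theorem corrSum_ge_inv_spanNum {X : Type*} [MetricSpace X] [CompactSpace X]
    (f : X → X) (hf : Continuous f) (x : X) (ε : ℝ) (hε : 0 < ε) (m n : ℕ)
    (hm : 0 < m) (hn : 0 < n) :
    1 / (spanNumOn f Set.univ m (ε / 2) : ℝ) ≤ corrSum f m x n ε := by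
  classical
  set r := spanNumOn f Set.univ m (ε / 2) with hr
  rcases Nat.eq_zero_or_pos r with h0 | hrpos
  · rw [h0]
    simp only [Nat.cast_zero, div_zero]
    unfold corrSum
    positivity
  · have hne : {k : ℕ | ∃ A : Finset X, (A : Set X) ⊆ Set.univ ∧ A.card = k ∧
        ∀ y ∈ Set.univ, ∃ a ∈ A, bowenDist f m y a ≤ ε / 2}.Nonempty := by
      by_contra h
      rw [Set.not_nonempty_iff_eq_empty] at h
      rw [hr, spanNumOn, h, Nat.sInf_empty] at hrpos
      exact lt_irrefl 0 hrpos
    have hmem := Nat.sInf_mem hne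
    obtain ⟨A, -, hAcard, hspan⟩ := hmem
    choose g hg1 hg2 using fun i : ℕ => hspan (f^[i] x) (Set.mem_univ _)
    set S := ((Finset.range n ×ˢ Finset.range n).filter fun q =>
        bowenDist f m (f^[q.1] x) (f^[q.2] x) ≤ ε) with hS
    -- fibers
    set fib : X → Finset ℕ := fun a => (Finset.range n).filter fun i => g i = a with hfib
    have hsum : ∑ a ∈ A, (fib a).card = n := by
      rw [← Finset.card_range n]
      exact (Finset.card_eq_sum_card_fiberwise fun i _ => hg1 i).symm
    have hsubset : ∀ a ∈ A, fib a ×ˢ fib a ⊆ S := by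
      intro a _ q hq
      rw [Finset.mem_product, hfib, Finset.mem_filter, Finset.mem_filter] at hq
      obtain ⟨⟨h1, hg1'⟩, h2, hg2'⟩ := hq
      rw [hS, Finset.mem_filter, Finset.mem_product]
      refine ⟨⟨h1, h2⟩, ?_⟩
      calc bowenDist f m (f^[q.1] x) (f^[q.2] x)
          ≤ bowenDist f m (f^[q.1] x) a + bowenDist f m (f^[q.2] x) a :=
            bowenDist_triangle' f m _ _ a
        _ ≤ ε / 2 + ε / 2 := by
            subst hg1'
            have h3 := hg2 q.2
            rw [hg2'] at h3
            exact add_le_add (hg2 q.1) h3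
        _ = ε := by ring
    have hdisj : (A : Set X).PairwiseDisjoint fun a => fib a ×ˢ fib a := by
      intro a _ b _ hab
      refine Finset.disjoint_left.2 fun q hqa hqb => hab ?_
      rw [Finset.mem_product, hfib, Finset.mem_filter, Finset.mem_filter] at hqa hqb
      rw [← hqa.1.2, hqb.1.2]
    have hcount : ∑ a ∈ A, (fib a).card ^ 2 ≤ S.card := by
      calc ∑ a ∈ A, (fib a).card ^ 2
          = ∑ a ∈ A, (fib a ×ˢ fib a).card := by
            simp [Finset.card_product, sq]
        _ = (A.biUnion fun a => fib a ×ˢ fib a).card :=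
            (Finset.card_biUnion fun a ha b hb hab => hdisj ha hb hab).symm
        _ ≤ S.card := Finset.card_le_card (Finset.biUnion_subset.2 hsubset)
    have hmain : (n : ℝ) ^ 2 ≤ (r : ℝ) * S.card := by
      have hcs : ((n : ℕ) : ℝ) ^ 2 ≤ (A.card : ℝ) * ∑ a ∈ A, ((fib a).card : ℝ) ^ 2 := by
        have := sq_sum_le_card_mul_sum_sq (s := A) (f := fun a => ((fib a).card : ℝ))
        rw [← Nat.cast_sum, hsum] at this
        exact_mod_cast this
      calc (n : ℝ) ^ 2 ≤ (A.card : ℝ) * ∑ a ∈ A, ((fib a).card : ℝ) ^ 2 := hcs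
        _ = (r : ℝ) * ∑ a ∈ A, ((fib a).card : ℝ) ^ 2 := by rw [hAcard]; rfl
        _ ≤ (r : ℝ) * S.card := by
            refine mul_le_mul_of_nonneg_left ?_ (by positivity)
            exact_mod_cast hcount
    have hrR : (0 : ℝ) < r := by exact_mod_cast hrpos
    have hnR : (0 : ℝ) < (n : ℝ) ^ 2 := by positivity
    unfold corrSum
    rw [div_le_div_iff₀ hrR hnR]
    calc 1 * (n : ℝ) ^ 2 = (n : ℝ) ^ 2 := one_mul _
      _ ≤ (r : ℝ) * S.card := hmain
      _ = (S.card : ℝ) * r := mul_comm _ _
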